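/- For the AdS background f(ρ) = ρ₀ sinh(ρ/ρ₀) with ρ₀ > 0, the function w(ρ) = (tanh²(ρ/(2ρ₀)) - c)/(tanh²(ρ/(2ρ₀)) + c) with c > 0 satisfies w' + (w² - 1)/f(ρ) = 0 on (0, ∞). -/

import Mathlib

theorem stmt17 (ρ₀ c : ℝ) (hρ₀ : 0 < ρ₀) (hc : 0 < c) (w : ℝ → ℝ)
    (hw : ∀ ρ : ℝ, w ρ = (Real.tanh (ρ/(2*ρ₀))^2 - c) / (Real.tanh (ρ/(2*ρ₀))^2 + c)) :
    ∀ ρ > (0:ℝ), HasDerivAt w ((1 - (w ρ)^2) / (ρ₀ * Real.sinh (ρ/ρ₀))) ρ := by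
  have hwg : w = fun ρ => (Real.sinh (ρ/(2*ρ₀))^2 - c * Real.cosh (ρ/(2*ρ₀))^2) /
      (Real.sinh (ρ/(2*ρ₀))^2 + c * Real.cosh (ρ/(2*ρ₀))^2) := by
    funext ρ
    have hch : Real.cosh (ρ/(2*ρ₀)) ≠ 0 := (Real.cosh_pos _).ne'
    have hd1 : Real.tanh (ρ/(2*ρ₀))^2 + c ≠ 0 := by
      have := sq_nonneg (Real.tanh (ρ/(2*ρ₀))); positivity
    have hd2 : Real.sinh (ρ/(2*ρ₀))^2 + c * Real.cosh (ρ/(2*ρ₀))^2 ≠ 0 := by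
      have := sq_nonneg (Real.sinh (ρ/(2*ρ₀)))
      have := sq_nonneg (Real.cosh (ρ/(2*ρ₀))); positivity
    rw [hw, Real.tanh_eq_sinh_div_cosh]
    field_simp
  intro ρ hρ
  set x := ρ/(2*ρ₀) with hxdef
  have h2ρ₀ : (2*ρ₀) ≠ 0 := by positivity
  have hxpos : 0 < x := by positivity
  have hs : 0 < Real.sinh x := Real.sinh_pos_iff.mpr hxpos
  have hch : 0 < Real.cosh x := Real.cosh_pos x
  have hB : Real.sinh x ^ 2 + c * Real.cosh x ^ 2 ≠ 0 := by positivity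
  have hx' : HasDerivAt (fun ρ : ℝ => ρ/(2*ρ₀)) (1/(2*ρ₀)) ρ := by
    simpa using (hasDerivAt_id ρ).div_const (2*ρ₀)
  have hsd : HasDerivAt (fun ρ => Real.sinh (ρ/(2*ρ₀))) (Real.cosh x * (1/(2*ρ₀))) ρ :=
    (Real.hasDerivAt_sinh x).comp (h₂ := Real.sinh) ρ hx'
  have hcd : HasDerivAt (fun ρ => Real.cosh (ρ/(2*ρ₀))) (Real.sinh x * (1/(2*ρ₀))) ρ :=
    (Real.hasDerivAt_cosh x).comp (h₂ := Real.cosh) ρ hx'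
  have hg := ((hsd.pow 2).sub ((hcd.pow 2).const_mul c)).div
      ((hsd.pow 2).add ((hcd.pow 2).const_mul c)) hB
  rw [hwg]
  convert hg using 1
  case e'_4 => rfl
  case e'_5 => rfl
  case e'_8 => rfl
  simp only [Pi.add_apply, Pi.sub_apply, Pi.pow_apply]
  have hsinh2 : Real.sinh (ρ/ρ₀) = 2 * Real.sinh x * Real.cosh x := by
    have : ρ/ρ₀ = 2 * x := by rw [hxdef]; field_simp
    rw [this, Real.sinh_two_mul]
  have hcs : Real.cosh x ^ 2 - Real.sinh x ^ 2 = 1 := Real.cosh_sq_sub_sinh_sq x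
  simp only [← hxdef] at *
  rw [hsinh2]
  have hρ₀' : ρ₀ ≠ 0 := hρ₀.ne'
  set S := Real.sinh x
  set C := Real.cosh x
  field_simp
  ring_nf
  linear_combination (-(4)*c*S^2*C^2) * hcs
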